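/- For every QSL(𝔄) formula f and every rational probability α ∈ [0,1], the size of the SL(𝔄) formula ⌈f⌉_α is at most 3 · |f| · 2^((π(f)+1)²), where |f| is the size of f and π(f) is its probabilistic size. -/

import Mathlib

namespace QSLPaper

open scoped Classical

noncomputable section

/-- Variables: a countably infinite set. -/
abbrev Var : Type := ℕ
/-- Values. -/
abbrev Val : Type := ℤ
/-- Locations: positive integers. -/
abbrev Loc : Type := ℕ+
/-- Stacks. -/
abbrev Stack : Type := Var → Val
/-- Heaps: finite partial functions from locations to `k`-tuples of values. -/
abbrev Heap (k : ℕ) : Type := Finmap (fun _ : Loc => Fin k → Val)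
/-- Program states: stack-heap pairs. -/
abbrev HState (k : ℕ) : Type := Stack × Heap k

/-- Syntax of separation logic `SL(𝔄)`; atoms are predicates, i.e. sets of states. -/
inductive SL (k : ℕ) : Type where
  | tt : SL k
  | atom (p : Set (HState k)) : SL k
  | not (φ : SL k) : SL k
  | and (φ ψ : SL k) : SL k
  | or (φ ψ : SL k) : SL k
  | ex (x : Var) (φ : SL k) : SL k
  | all (x : Var) (φ : SL k) : SL k
  | sep (φ ψ : SL k) : SL k
  | wand (φ ψ : SL k) : SL k

/-- Standard separation-logic satisfaction relation `(s,h) ⊨ φ`. -/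
def SL.sat {k : ℕ} : SL k → HState k → Prop
  | .tt, _ => True
  | .atom p, σ => σ ∈ p
  | .not φ, σ => ¬ φ.sat σ
  | .and φ ψ, σ => φ.sat σ ∧ ψ.sat σ
  | .or φ ψ, σ => φ.sat σ ∨ ψ.sat σ
  | .ex x φ, σ => ∃ v : Val, φ.sat (Function.update σ.1 x v, σ.2)
  | .all x φ, σ => ∀ v : Val, φ.sat (Function.update σ.1 x v, σ.2)
  | .sep φ ψ, σ => ∃ h₁ h₂ : Heap k, h₁.Disjoint h₂ ∧ σ.2 = h₁ ∪ h₂ ∧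
      φ.sat (σ.1, h₁) ∧ ψ.sat (σ.1, h₂)
  | .wand φ ψ, σ => ∀ h' : Heap k, σ.2.Disjoint h' → φ.sat (σ.1, h') →
      ψ.sat (σ.1, σ.2 ∪ h')

/-- A formula is pure if its satisfaction does not depend on the heap. -/
def SL.Pure {k : ℕ} (B : SL k) : Prop :=
  ∀ (s : Stack) (h h' : Heap k), B.sat (s, h) ↔ B.sat (s, h')

/-- All atoms of the formula belong to the set `𝔄` of atomic predicates. -/
def SL.atomsIn {k : ℕ} (𝔄 : Set (Set (HState k))) : SL k → Prop
  | .tt => True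
  | .atom p => p ∈ 𝔄
  | .not φ => φ.atomsIn 𝔄
  | .and φ ψ => φ.atomsIn 𝔄 ∧ ψ.atomsIn 𝔄
  | .or φ ψ => φ.atomsIn 𝔄 ∧ ψ.atomsIn 𝔄
  | .ex _ φ => φ.atomsIn 𝔄
  | .all _ φ => φ.atomsIn 𝔄
  | .sep φ ψ => φ.atomsIn 𝔄 ∧ ψ.atomsIn 𝔄
  | .wand φ ψ => φ.atomsIn 𝔄 ∧ ψ.atomsIn 𝔄

/-- Syntax of quantitative separation logic `QSL(𝔄)`:
`f ::= [φ] | [B]·f + [¬B]·f | q·f + (1−q)·f | f·f | 1−f | max(f,f) | min(f,f) |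
       Sup x: f | Inf x: f | f ⋆ f | [φ] ─⋆ f`. -/
inductive QSL (k : ℕ) : Type where
  | iver (φ : SL k) : QSL k
  | ite (B : SL k) (g u : QSL k) : QSL k
  | pch (q : ℚ) (g u : QSL k) : QSL k
  | mul (g u : QSL k) : QSL k
  | onem (g : QSL k) : QSL k
  | qmax (g u : QSL k) : QSL k
  | qmin (g u : QSL k) : QSL k
  | sup (x : Var) (g : QSL k) : QSL k
  | inf (x : Var) (g : QSL k) : QSL k
  | sep (g u : QSL k) : QSL k
  | wand (φ : SL k) (g : QSL k) : QSL k

/-- Well-formedness: guards of conditionals are pure, and all probabilities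
lie in `[0,1]`.  A term `f : QSL k` with `f.WF` (and atoms in `𝔄`)
is a `QSL(𝔄)` formula as generated by the grammar. -/
def QSL.WF {k : ℕ} : QSL k → Prop
  | .iver _ => True
  | .ite B g u => B.Pure ∧ g.WF ∧ u.WF
  | .pch q g u => 0 ≤ q ∧ q ≤ 1 ∧ g.WF ∧ u.WF
  | .mul g u => g.WF ∧ u.WF
  | .onem g => g.WF
  | .qmax g u => g.WF ∧ u.WF
  | .qmin g u => g.WF ∧ u.WF
  | .sup _ g => g.WF
  | .inf _ g => g.WF
  | .sep g u => g.WF ∧ u.WF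
  | .wand _ g => g.WF

/-- All atoms of a `QSL` formula belong to `𝔄`. -/
def QSL.atomsIn {k : ℕ} (𝔄 : Set (Set (HState k))) : QSL k → Prop
  | .iver φ => φ.atomsIn 𝔄
  | .ite B g u => B.atomsIn 𝔄 ∧ g.atomsIn 𝔄 ∧ u.atomsIn 𝔄
  | .pch _ g u => g.atomsIn 𝔄 ∧ u.atomsIn 𝔄
  | .mul g u => g.atomsIn 𝔄 ∧ u.atomsIn 𝔄
  | .onem g => g.atomsIn 𝔄
  | .qmax g u => g.atomsIn 𝔄 ∧ u.atomsIn 𝔄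
  | .qmin g u => g.atomsIn 𝔄 ∧ u.atomsIn 𝔄
  | .sup _ g => g.atomsIn 𝔄
  | .inf _ g => g.atomsIn 𝔄
  | .sep g u => g.atomsIn 𝔄 ∧ u.atomsIn 𝔄
  | .wand φ g => φ.atomsIn 𝔄 ∧ g.atomsIn 𝔄

/-- The semantics `⟦f⟧ : States → ℝ` of quantitative separation logic. -/
noncomputable def QSL.eval {k : ℕ} : QSL k → HState k → ℝ
  | .iver φ, σ => if φ.sat σ then 1 else 0
  | .ite B g u, σ =>
      (if B.sat σ then (1 : ℝ) else 0) * g.eval σ +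
      (if (SL.not B).sat σ then (1 : ℝ) else 0) * u.eval σ
  | .pch q g u, σ => (q : ℝ) * g.eval σ + (1 - (q : ℝ)) * u.eval σ
  | .mul g u, σ => g.eval σ * u.eval σ
  | .onem g, σ => 1 - g.eval σ
  | .qmax g u, σ => max (g.eval σ) (u.eval σ)
  | .qmin g u, σ => min (g.eval σ) (u.eval σ)
  | .sup x g, σ => sSup { r : ℝ | ∃ v : Val, r = g.eval (Function.update σ.1 x v, σ.2) }
  | .inf x g, σ => sInf { r : ℝ | ∃ v : Val, r = g.eval (Function.update σ.1 x v, σ.2) }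
  | .sep g u, σ => sSup { r : ℝ | ∃ h₁ h₂ : Heap k, h₁.Disjoint h₂ ∧ σ.2 = h₁ ∪ h₂ ∧
      r = g.eval (σ.1, h₁) * u.eval (σ.1, h₂) }
  | .wand φ g, σ =>
      if { r : ℝ | ∃ h' : Heap k, σ.2.Disjoint h' ∧ φ.sat (σ.1, h') ∧
            r = g.eval (σ.1, σ.2 ∪ h') } = (∅ : Set ℝ) then 1
      else sInf { r : ℝ | ∃ h' : Heap k, σ.2.Disjoint h' ∧ φ.sat (σ.1, h') ∧
            r = g.eval (σ.1, σ.2 ∪ h') }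

end

end QSLPaper

namespace QSLPaper

/-- Size of an `SL` formula (atoms have fixed atomic size 1). -/
def SL.size {k : ℕ} : SL k → ℕ
  | .tt => 1
  | .atom _ => 1
  | .not φ => 1 + φ.size
  | .and φ ψ => 1 + φ.size + ψ.size
  | .or φ ψ => 1 + φ.size + ψ.size
  | .ex _ φ => 1 + φ.size
  | .all _ φ => 1 + φ.size
  | .sep φ ψ => 1 + φ.size + ψ.size
  | .wand φ ψ => 1 + φ.size + ψ.size

/-- Size `|f|` of a `QSL` formula. -/
def QSL.size {k : ℕ} : QSL k → ℕ
  | .iver φ => φ.size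
  | .ite B g u => 1 + B.size + g.size + (1 + B.size) + u.size
  | .pch _ g u => 1 + g.size + u.size
  | .mul g u => 1 + g.size + u.size
  | .onem g => 1 + g.size
  | .qmax g u => 1 + g.size + u.size
  | .qmin g u => 1 + g.size + u.size
  | .sup _ g => 1 + g.size
  | .inf _ g => 1 + g.size
  | .sep g u => 1 + g.size + u.size
  | .wand φ g => 1 + g.size + φ.size

/-- Probabilistic size `π(f)` of a `QSL` formula. -/
def QSL.psize {k : ℕ} : QSL k → ℕ
  | .iver _ => 0
  | .ite _ g u => g.psize + u.psize
  | .pch _ g u => 1 + g.psize + u.psize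
  | .mul g u => 1 + g.psize + u.psize
  | .onem g => g.psize
  | .qmax g u => g.psize + u.psize
  | .qmin g u => g.psize + u.psize
  | .sup _ g => g.psize
  | .inf _ g => g.psize
  | .sep g u => 1 + g.psize + u.psize
  | .wand _ g => g.psize

/-- The evaluation set `Eval(f)` as a finite set of rationals. -/
def QSL.evalF {k : ℕ} : QSL k → Finset ℚ
  | .iver _ => {0, 1}
  | .ite _ g u => g.evalF ∪ u.evalF
  | .pch q g u => Finset.image₂ (fun β γ => q * β + (1 - q) * γ) g.evalF u.evalF
  | .mul g u => Finset.image₂ (fun β γ => β * γ) g.evalF u.evalF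
  | .onem g => g.evalF.image (fun β => 1 - β)
  | .qmax g u => g.evalF ∪ u.evalF
  | .qmin g u => g.evalF ∪ u.evalF
  | .sup _ g => g.evalF
  | .inf _ g => g.evalF
  | .sep g u => Finset.image₂ (fun β γ => β * γ) g.evalF u.evalF
  | .wand _ g => g.evalF

/-- A nonempty disjunction `φ ∨ ψ₁ ∨ … ∨ ψₙ`. -/
def SL.orChain {k : ℕ} : SL k → List (SL k) → SL k
  | φ, [] => φ
  | φ, ψ :: l => .or φ (SL.orChain ψ l)

/-- Disjunction of a list of formulae (`false`, i.e. `¬true`, for the empty list;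
in all uses below the list is provably nonempty). -/
def SL.orList {k : ℕ} : List (SL k) → SL k
  | [] => .not .tt
  | φ :: l => SL.orChain φ l

/-- The construction `⌈f⌉_α` of an `SL(𝔄)` formula characterizing `α ≤ ⟦f⟧`. -/
noncomputable def QSL.atLeast {k : ℕ} : QSL k → ℚ → SL k
  | .iver φ, α => if α ≤ 0 then .tt else φ
  | .ite B g u, α => .or (.and B (g.atLeast α)) (.and (.not B) (u.atLeast α))
  | .pch q g u, α =>
      SL.orList ((((g.evalF ×ˢ u.evalF).filter
          (fun p => α ≤ q * p.1 + (1 - q) * p.2)).toList).map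
        (fun p => .and (g.atLeast p.1) (u.atLeast p.2)))
  | .mul g u, α =>
      SL.orList ((((g.evalF ×ˢ u.evalF).filter (fun p => α ≤ p.1 * p.2)).toList).map
        (fun p => .and (g.atLeast p.1) (u.atLeast p.2)))
  | .onem g, α =>
      if α ≤ 0 then .tt
      else .not (g.atLeast (WithTop.untopD 1 ((g.evalF.filter (fun β => 1 - α < β)).min)))
  | .qmax g u, α => .or (g.atLeast α) (u.atLeast α)
  | .qmin g u, α => .and (g.atLeast α) (u.atLeast α)
  | .sup x g, α => .ex x (g.atLeast α)
  | .inf x g, α => .all x (g.atLeast α)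
  | .sep g u, α =>
      SL.orList ((((g.evalF ×ˢ u.evalF).filter (fun p => α ≤ p.1 * p.2)).toList).map
        (fun p => .sep (g.atLeast p.1) (u.atLeast p.2)))
  | .wand φ g, α => .wand φ (g.atLeast α)

end QSLPaper

namespace QSLPaper

open scoped Classical

lemma SL.size_pos {k : ℕ} (φ : SL k) : 1 ≤ φ.size := by
  cases φ <;> simp [SL.size] <;> omega

lemma SL.orChain_size {k : ℕ} (l : List (SL k)) (φ : SL k) :
    (SL.orChain φ l).size = φ.size + ((l.map SL.size).sum + l.length) := by
  induction l generalizing φ with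
  | nil => simp [SL.orChain]
  | cons ψ l ih => simp [SL.orChain, SL.size, ih]; omega

lemma SL.orList_size_le {k : ℕ} (l : List (SL k)) :
    (SL.orList l).size ≤ 2 + ((l.map SL.size).sum + l.length) := by
  cases l with
  | nil => simp [SL.orList, SL.size]
  | cons φ l => simp [SL.orList, SL.orChain_size, SL.size]; omega

lemma QSL.zero_one_mem_evalF {k : ℕ} (f : QSL k) :
    (0 : ℚ) ∈ f.evalF ∧ (1 : ℚ) ∈ f.evalF := by
  induction f with
  | iver φ => simp [QSL.evalF]
  | ite B g u ihg ihu => simp [QSL.evalF]; tauto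
  | pch q g u ihg ihu =>
      refine ⟨?_, ?_⟩ <;> rw [QSL.evalF, Finset.mem_image₂]
      · exact ⟨0, ihg.1, 0, ihu.1, by ring⟩
      · exact ⟨1, ihg.2, 1, ihu.2, by ring⟩
  | mul g u ihg ihu =>
      refine ⟨?_, ?_⟩ <;> rw [QSL.evalF, Finset.mem_image₂]
      · exact ⟨0, ihg.1, 0, ihu.1, by ring⟩
      · exact ⟨1, ihg.2, 1, ihu.2, by ring⟩
  | onem g ihg =>
      refine ⟨?_, ?_⟩ <;> rw [QSL.evalF, Finset.mem_image]
      · exact ⟨1, ihg.2, by ring⟩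
      · exact ⟨0, ihg.1, by ring⟩
  | qmax g u ihg ihu => simp [QSL.evalF]; tauto
  | qmin g u ihg ihu => simp [QSL.evalF]; tauto
  | sup x g ihg => exact ihg
  | inf x g ihg => exact ihg
  | sep g u ihg ihu =>
      refine ⟨?_, ?_⟩ <;> rw [QSL.evalF, Finset.mem_image₂]
      · exact ⟨0, ihg.1, 0, ihu.1, by ring⟩
      · exact ⟨1, ihg.2, 1, ihu.2, by ring⟩
  | wand φ g ihg => exact ihg

lemma union_card_aux (s t : Finset ℚ) (h0s : (0:ℚ) ∈ s) (h1s : (1:ℚ) ∈ s)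
    (h0t : (0:ℚ) ∈ t) (h1t : (1:ℚ) ∈ t) (a b : ℕ)
    (hs : s.card ≤ 2 ^ (a + 1)) (ht : t.card ≤ 2 ^ (b + 1)) :
    (s ∪ t).card ≤ 2 ^ (a + b + 1) := by
  have hsub : ({0, 1} : Finset ℚ) ⊆ s ∩ t := by
    intro x hx
    simp only [Finset.mem_insert, Finset.mem_singleton] at hx
    rcases hx with rfl | rfl <;> simp [Finset.mem_inter, *]
  have h2 : 2 ≤ (s ∩ t).card := by
    have := Finset.card_le_card hsub
    simpa using this
  have key := Finset.card_union_add_card_inter s t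
  have hx : 1 ≤ 2 ^ a := Nat.one_le_two_pow
  have hy : 1 ≤ 2 ^ b := Nat.one_le_two_pow
  have hab : 2 ^ a + 2 ^ b ≤ 2 ^ (a + b) + 1 := by
    rw [pow_add]
    rcases Nat.exists_eq_add_of_le hx with ⟨x, hxe⟩
    rcases Nat.exists_eq_add_of_le hy with ⟨y, hye⟩
    rw [hxe, hye]; nlinarith
  have : 2 ^ (a + 1) + 2 ^ (b + 1) ≤ 2 ^ (a + b + 1) + 2 := by
    have e1 : 2 ^ (a + 1) = 2 * 2 ^ a := by ring
    have e2 : 2 ^ (b + 1) = 2 * 2 ^ b := by ring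
    have e3 : 2 ^ (a + b + 1) = 2 * 2 ^ (a + b) := by ring
    omega
  omega

lemma QSL.evalF_card_le {k : ℕ} (f : QSL k) :
    f.evalF.card ≤ 2 ^ (f.psize + 1) := by
  induction f with
  | iver φ =>
      simp only [QSL.evalF, QSL.psize]
      exact le_trans (Finset.card_insert_le _ _) (by simp)
  | ite B g u ihg ihu =>
      simpa [QSL.evalF, QSL.psize] using
        union_card_aux g.evalF u.evalF (g.zero_one_mem_evalF).1 (g.zero_one_mem_evalF).2
          (u.zero_one_mem_evalF).1 (u.zero_one_mem_evalF).2 g.psize u.psize ihg ihu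
  | pch q g u ihg ihu =>
      calc (QSL.pch q g u).evalF.card ≤ g.evalF.card * u.evalF.card :=
            Finset.card_image₂_le _ _ _
        _ ≤ 2 ^ (g.psize + 1) * 2 ^ (u.psize + 1) := Nat.mul_le_mul ihg ihu
        _ = 2 ^ ((QSL.pch q g u).psize + 1) := by
            rw [← pow_add]; simp [QSL.psize]; ring_nf
  | mul g u ihg ihu =>
      calc (QSL.mul g u).evalF.card ≤ g.evalF.card * u.evalF.card :=
            Finset.card_image₂_le _ _ _
        _ ≤ 2 ^ (g.psize + 1) * 2 ^ (u.psize + 1) := Nat.mul_le_mul ihg ihu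
        _ = 2 ^ ((QSL.mul g u).psize + 1) := by
            rw [← pow_add]; simp [QSL.psize]; ring_nf
  | onem g ihg =>
      calc (QSL.onem g).evalF.card ≤ g.evalF.card := Finset.card_image_le
        _ ≤ 2 ^ ((QSL.onem g).psize + 1) := by simpa [QSL.psize] using ihg
  | qmax g u ihg ihu =>
      simpa [QSL.evalF, QSL.psize] using
        union_card_aux g.evalF u.evalF (g.zero_one_mem_evalF).1 (g.zero_one_mem_evalF).2
          (u.zero_one_mem_evalF).1 (u.zero_one_mem_evalF).2 g.psize u.psize ihg ihu
  | qmin g u ihg ihu =>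
      simpa [QSL.evalF, QSL.psize] using
        union_card_aux g.evalF u.evalF (g.zero_one_mem_evalF).1 (g.zero_one_mem_evalF).2
          (u.zero_one_mem_evalF).1 (u.zero_one_mem_evalF).2 g.psize u.psize ihg ihu
  | sup x g ihg => simpa [QSL.evalF, QSL.psize] using ihg
  | inf x g ihg => simpa [QSL.evalF, QSL.psize] using ihg
  | sep g u ihg ihu =>
      calc (QSL.sep g u).evalF.card ≤ g.evalF.card * u.evalF.card :=
            Finset.card_image₂_le _ _ _
        _ ≤ 2 ^ (g.psize + 1) * 2 ^ (u.psize + 1) := Nat.mul_le_mul ihg ihu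
        _ = 2 ^ ((QSL.sep g u).psize + 1) := by
            rw [← pow_add]; simp [QSL.psize]; ring_nf
  | wand φ g ihg => simpa [QSL.evalF, QSL.psize] using ihg

lemma arith_key (a b sg su m S : ℕ)
    (hm : m ≤ 2 ^ (a + 1) * 2 ^ (b + 1))
    (hS : S ≤ 2 + (m * (1 + 3 * sg * 2 ^ ((a + 1) ^ 2) + 3 * su * 2 ^ ((b + 1) ^ 2)) + m)) :
    S ≤ 3 * (1 + sg + su) * 2 ^ ((a + b + 2) ^ 2) := by
  have hm' : m ≤ 2 ^ (a + b + 2) := by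
    rw [← pow_add] at hm
    have e : a + 1 + (b + 1) = a + b + 2 := by omega
    rwa [e] at hm
  have hma : m * 2 ^ ((a + 1) ^ 2) ≤ 2 ^ ((a + b + 2) ^ 2) := by
    calc m * 2 ^ ((a + 1) ^ 2) ≤ 2 ^ (a + b + 2) * 2 ^ ((a + 1) ^ 2) :=
          Nat.mul_le_mul_right _ hm'
      _ = 2 ^ (a + b + 2 + (a + 1) ^ 2) := (pow_add 2 _ _).symm
      _ ≤ 2 ^ ((a + b + 2) ^ 2) := Nat.pow_le_pow_right (by norm_num) (by nlinarith)
  have hmb : m * 2 ^ ((b + 1) ^ 2) ≤ 2 ^ ((a + b + 2) ^ 2) := by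
    calc m * 2 ^ ((b + 1) ^ 2) ≤ 2 ^ (a + b + 2) * 2 ^ ((b + 1) ^ 2) :=
          Nat.mul_le_mul_right _ hm'
      _ = 2 ^ (a + b + 2 + (b + 1) ^ 2) := (pow_add 2 _ _).symm
      _ ≤ 2 ^ ((a + b + 2) ^ 2) := Nat.pow_le_pow_right (by norm_num) (by nlinarith)
  have h2m : 2 + 2 * m ≤ 3 * 2 ^ ((a + b + 2) ^ 2) := by
    have h1 : 2 ^ (a + b + 2) ≤ 2 ^ ((a + b + 2) ^ 2) :=
      Nat.pow_le_pow_right (by norm_num) (by nlinarith)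
    have h2 : 2 ^ 1 ≤ 2 ^ ((a + b + 2) ^ 2) :=
      Nat.pow_le_pow_right (by norm_num) (Nat.one_le_pow _ _ (by omega))
    have h2' : (2 : ℕ) ^ 1 = 2 := by norm_num
    omega
  have hsgA : 3 * sg * (m * 2 ^ ((a + 1) ^ 2)) ≤ 3 * sg * 2 ^ ((a + b + 2) ^ 2) :=
    Nat.mul_le_mul_left _ hma
  have hsuB : 3 * su * (m * 2 ^ ((b + 1) ^ 2)) ≤ 3 * su * 2 ^ ((a + b + 2) ^ 2) :=
    Nat.mul_le_mul_left _ hmb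
  calc S ≤ 2 + (m * (1 + 3 * sg * 2 ^ ((a + 1) ^ 2) + 3 * su * 2 ^ ((b + 1) ^ 2)) + m) := hS
    _ = (2 + 2 * m) + 3 * sg * (m * 2 ^ ((a + 1) ^ 2))
          + 3 * su * (m * 2 ^ ((b + 1) ^ 2)) := by ring
    _ ≤ 3 * 2 ^ ((a + b + 2) ^ 2) + 3 * sg * 2 ^ ((a + b + 2) ^ 2)
          + 3 * su * 2 ^ ((a + b + 2) ^ 2) := add_le_add (add_le_add h2m hsgA) hsuB
    _ = 3 * (1 + sg + su) * 2 ^ ((a + b + 2) ^ 2) := by ring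

lemma prod_case_bound {k : ℕ} (g u : QSL k)
    (ihg : ∀ β : ℚ, (g.atLeast β).size ≤ 3 * g.size * 2 ^ ((g.psize + 1) ^ 2))
    (ihu : ∀ β : ℚ, (u.atLeast β).size ≤ 3 * u.size * 2 ^ ((u.psize + 1) ^ 2))
    (T : Finset (ℚ × ℚ)) (hT : T ⊆ g.evalF ×ˢ u.evalF)
    (mk : SL k → SL k → SL k)
    (hmk : ∀ φ ψ : SL k, (mk φ ψ).size = 1 + φ.size + ψ.size) :
    (SL.orList ((T.toList).map (fun p => mk (g.atLeast p.1) (u.atLeast p.2)))).size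
      ≤ 3 * (1 + g.size + u.size) * 2 ^ ((g.psize + u.psize + 2) ^ 2) := by
  set L := T.toList with hL
  set F : ℚ × ℚ → SL k := fun p => mk (g.atLeast p.1) (u.atLeast p.2) with hF
  have hm : L.length ≤ 2 ^ (g.psize + 1) * 2 ^ (u.psize + 1) := by
    rw [hL, Finset.length_toList]
    calc T.card ≤ (g.evalF ×ˢ u.evalF).card := Finset.card_le_card hT
      _ = g.evalF.card * u.evalF.card := Finset.card_product _ _
      _ ≤ 2 ^ (g.psize + 1) * 2 ^ (u.psize + 1) :=
          Nat.mul_le_mul g.evalF_card_le u.evalF_card_le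
  have hc : ∀ x ∈ (L.map F).map SL.size,
      x ≤ 1 + 3 * g.size * 2 ^ ((g.psize + 1) ^ 2) + 3 * u.size * 2 ^ ((u.psize + 1) ^ 2) := by
    intro x hx
    rw [List.mem_map] at hx
    obtain ⟨φ, hφ, rfl⟩ := hx
    rw [List.mem_map] at hφ
    obtain ⟨p, _, rfl⟩ := hφ
    simp only [hF, hmk]
    have := ihg p.1
    have := ihu p.2
    omega
  have hsum : (((L.map F).map SL.size)).sum ≤ (L.map F).length *
      (1 + 3 * g.size * 2 ^ ((g.psize + 1) ^ 2) + 3 * u.size * 2 ^ ((u.psize + 1) ^ 2)) := by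
    have := List.sum_le_card_nsmul ((L.map F).map SL.size) _ hc
    simpa [smul_eq_mul] using this
  have horl := SL.orList_size_le (L.map F)
  apply arith_key g.psize u.psize g.size u.size L.length _ hm
  rw [List.length_map] at hsum
  calc (SL.orList (L.map F)).size ≤ 2 + (((L.map F).map SL.size).sum + (L.map F).length) :=
        horl
    _ ≤ 2 + (L.length * (1 + 3 * g.size * 2 ^ ((g.psize + 1) ^ 2)
          + 3 * u.size * 2 ^ ((u.psize + 1) ^ 2)) + L.length) := by
        rw [List.length_map]; omega

lemma atLeast_size_bound {k : ℕ} (f : QSL k) (α : ℚ) :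
    (f.atLeast α).size ≤ 3 * f.size * 2 ^ ((f.psize + 1) ^ 2) := by
  induction f generalizing α with
  | iver φ =>
      have h1 := SL.size_pos φ
      simp only [QSL.atLeast, QSL.size, QSL.psize]
      have h2 : 1 ≤ 2 ^ ((0 + 1) ^ 2) := Nat.one_le_two_pow
      split_ifs
      · show (SL.tt : SL k).size ≤ _
        simp only [SL.size]
        nlinarith [Nat.mul_le_mul h1 h2]
      · nlinarith [Nat.mul_le_mul (le_refl φ.size) h2]
  | ite B g u ihg ihu =>
      simp only [QSL.atLeast, QSL.size, QSL.psize, SL.size]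
      have hmg : 2 ^ ((g.psize + 1) ^ 2) ≤ 2 ^ ((g.psize + u.psize + 1) ^ 2) :=
        Nat.pow_le_pow_right (by norm_num) (Nat.pow_le_pow_left (by omega) 2)
      have hmu : 2 ^ ((u.psize + 1) ^ 2) ≤ 2 ^ ((g.psize + u.psize + 1) ^ 2) :=
        Nat.pow_le_pow_right (by norm_num) (Nat.pow_le_pow_left (by omega) 2)
      have hg : (g.atLeast α).size ≤ 3 * g.size * 2 ^ ((g.psize + u.psize + 1) ^ 2) :=
        (ihg α).trans (Nat.mul_le_mul_left _ hmg)
      have hu : (u.atLeast α).size ≤ 3 * u.size * 2 ^ ((g.psize + u.psize + 1) ^ 2) :=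
        (ihu α).trans (Nat.mul_le_mul_left _ hmu)
      have h1 : 1 ≤ 2 ^ ((g.psize + u.psize + 1) ^ 2) := Nat.one_le_two_pow
      nlinarith [hg, hu, h1, Nat.mul_le_mul_left B.size h1]
  | pch q g u ihg ihu =>
      simp only [QSL.atLeast, QSL.size, QSL.psize]
      have e : 1 + g.psize + u.psize + 1 = g.psize + u.psize + 2 := by omega
      rw [e]
      exact prod_case_bound g u ihg ihu _ (Finset.filter_subset _ _) SL.and
        (fun _ _ => rfl)
  | mul g u ihg ihu =>
      simp only [QSL.atLeast, QSL.size, QSL.psize]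
      have e : 1 + g.psize + u.psize + 1 = g.psize + u.psize + 2 := by omega
      rw [e]
      exact prod_case_bound g u ihg ihu _ (Finset.filter_subset _ _) SL.and
        (fun _ _ => rfl)
  | onem g ihg =>
      simp only [QSL.atLeast, QSL.size, QSL.psize]
      have h1 : 1 ≤ 2 ^ ((g.psize + 1) ^ 2) := Nat.one_le_two_pow
      split_ifs with h
      · show (SL.tt : SL k).size ≤ _
        simp only [SL.size]
        nlinarith
      · simp only [SL.size]
        have := ihg (WithTop.untopD 1 ((g.evalF.filter (fun β => 1 - α < β)).min))
        nlinarith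
  | qmax g u ihg ihu =>
      simp only [QSL.atLeast, QSL.size, QSL.psize, SL.size]
      have hmg : 2 ^ ((g.psize + 1) ^ 2) ≤ 2 ^ ((g.psize + u.psize + 1) ^ 2) :=
        Nat.pow_le_pow_right (by norm_num) (Nat.pow_le_pow_left (by omega) 2)
      have hmu : 2 ^ ((u.psize + 1) ^ 2) ≤ 2 ^ ((g.psize + u.psize + 1) ^ 2) :=
        Nat.pow_le_pow_right (by norm_num) (Nat.pow_le_pow_left (by omega) 2)
      have hg : (g.atLeast α).size ≤ 3 * g.size * 2 ^ ((g.psize + u.psize + 1) ^ 2) :=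
        (ihg α).trans (Nat.mul_le_mul_left _ hmg)
      have hu : (u.atLeast α).size ≤ 3 * u.size * 2 ^ ((g.psize + u.psize + 1) ^ 2) :=
        (ihu α).trans (Nat.mul_le_mul_left _ hmu)
      have h1 : 1 ≤ 2 ^ ((g.psize + u.psize + 1) ^ 2) := Nat.one_le_two_pow
      nlinarith
  | qmin g u ihg ihu =>
      simp only [QSL.atLeast, QSL.size, QSL.psize, SL.size]
      have hmg : 2 ^ ((g.psize + 1) ^ 2) ≤ 2 ^ ((g.psize + u.psize + 1) ^ 2) :=
        Nat.pow_le_pow_right (by norm_num) (Nat.pow_le_pow_left (by omega) 2)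
      have hmu : 2 ^ ((u.psize + 1) ^ 2) ≤ 2 ^ ((g.psize + u.psize + 1) ^ 2) :=
        Nat.pow_le_pow_right (by norm_num) (Nat.pow_le_pow_left (by omega) 2)
      have hg : (g.atLeast α).size ≤ 3 * g.size * 2 ^ ((g.psize + u.psize + 1) ^ 2) :=
        (ihg α).trans (Nat.mul_le_mul_left _ hmg)
      have hu : (u.atLeast α).size ≤ 3 * u.size * 2 ^ ((g.psize + u.psize + 1) ^ 2) :=
        (ihu α).trans (Nat.mul_le_mul_left _ hmu)
      have h1 : 1 ≤ 2 ^ ((g.psize + u.psize + 1) ^ 2) := Nat.one_le_two_pow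
      nlinarith
  | sup x g ihg =>
      simp only [QSL.atLeast, QSL.size, QSL.psize, SL.size]
      have h1 : 1 ≤ 2 ^ ((g.psize + 1) ^ 2) := Nat.one_le_two_pow
      have := ihg α
      nlinarith
  | inf x g ihg =>
      simp only [QSL.atLeast, QSL.size, QSL.psize, SL.size]
      have h1 : 1 ≤ 2 ^ ((g.psize + 1) ^ 2) := Nat.one_le_two_pow
      have := ihg α
      nlinarith
  | sep g u ihg ihu =>
      simp only [QSL.atLeast, QSL.size, QSL.psize]
      have e : 1 + g.psize + u.psize + 1 = g.psize + u.psize + 2 := by omega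
      rw [e]
      exact prod_case_bound g u ihg ihu _ (Finset.filter_subset _ _) SL.sep
        (fun _ _ => rfl)
  | wand φ g ihg =>
      simp only [QSL.atLeast, QSL.size, QSL.psize, SL.size]
      have h1 : 1 ≤ 2 ^ ((g.psize + 1) ^ 2) := Nat.one_le_two_pow
      have := ihg α
      nlinarith [SL.size_pos φ, Nat.mul_le_mul_left φ.size h1]

/-- For every `QSL(𝔄)` formula `f` and every rational
probability `α ∈ [0,1]`, the size of the constructed `SL(𝔄)` formula `⌈f⌉_α`
is at most `3 · |f| · 2^((π(f)+1)²)`. -/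
theorem atLeast_size_le {k : ℕ} (hk : 1 ≤ k)
    (𝔄 : Set (Set (HState k))) (f : QSL k)
    (hWF : f.WF) (hA : f.atomsIn 𝔄)
    (α : ℚ) (hα0 : 0 ≤ α) (hα1 : α ≤ 1) :
    (f.atLeast α).size ≤ 3 * f.size * 2 ^ ((f.psize + 1) ^ 2) := by
  exact atLeast_size_bound f α

end QSLPaper
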